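/- (Theorem 2.) Assume h_{ab} ≠ 0 for all 1 ≤ a < b ≤ 5 and F_{ik}F_{jl} − F_{il}F_{jk} ≠ 0 for every permutation (i,j,k,l,m) of (1,…,5). Then there exists a choice of square roots q (a complex number q_s with q_s² = ω_s for every 3-element subset s of {1,…,5}) such that H(i,j,k,l,m) takes one and the same value for all permutations (i,j,k,l,m) of (1,…,5); that is, with this choice the quantity H_u of formula (Hu) is the same for all pairs (oriented edge b = ij) ⊂ (tetrahedron t = ijkl) and thus belongs only to the pentachoron u itself (its common value is the square η_u² of the paper's factor η_u). -/

import Mathlib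

noncomputable section

/-- The remaining fifth vertex of the pentachoron `{0,1,2,3,4}` (vertices `1,…,5` of the
paper, shifted to `Fin 5`), given four pairwise distinct vertices `i, j, k, l`. -/
def fifth (i j k l : Fin 5) : Fin 5 :=
  ⟨(10 - ((i : ℕ) + j + k + l)) % 5, Nat.mod_lt _ (by norm_num)⟩

/-- The edge-operator coefficient `β̃(i,j;k,l) = F_{ik}F_{jl} − F_{il}F_{jk}`. -/
def betaT (F : Fin 5 → Fin 5 → ℂ) (i j k l : Fin 5) : ℂ :=
  F i k * F j l - F i l * F j k

/-- The edge-operator coefficient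
`γ̃(i,j;k,l) = F_{ik}F_{jm}F_{lm} − F_{im}F_{jk}F_{lm} − F_{il}F_{jm}F_{km} + F_{im}F_{jl}F_{km}`,
where `m` is the remaining fifth vertex. -/
def gammaT (F : Fin 5 → Fin 5 → ℂ) (i j k l : Fin 5) : ℂ :=
  F i k * F j (fifth i j k l) * F l (fifth i j k l)
    - F i (fifth i j k l) * F j k * F l (fifth i j k l)
    - F i l * F j (fifth i j k l) * F k (fifth i j k l)
    + F i (fifth i j k l) * F j l * F k (fifth i j k l)

/-- Formula (pf) of the paper, with normalization `p = 1`: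
`h(i,j | k,l) := β̃(k,i;j,l)·γ̃(k,j;l,i) + β̃(k,j;l,i)·γ̃(k,i;j,l)`. -/
def hpair (F : Fin 5 → Fin 5 → ℂ) (i j k l : Fin 5) : ℂ :=
  betaT F k i j l * gammaT F k j l i + betaT F k j l i * gammaT F k i j l

/-- The edge coefficient `h_{ab}` of the unordered edge `{a,b}`: for `a < b` it is
`h(a,b | c,d)` where `c < d` are the two smallest elements of the complement of `{a,b}`,
and `h_{ba} := h_{ab}`. -/
def hEdge (F : Fin 5 → Fin 5 → ℂ) (a b : Fin 5) : ℂ :=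
  hpair F (min a b) (max a b)
    (Finset.sort ((Finset.univ : Finset (Fin 5)) \ {a, b}) (· ≤ ·)).headI
    (Finset.sort ((Finset.univ : Finset (Fin 5)) \ {a, b}) (· ≤ ·)).tail.headI

/-- Formula (ph) with `p = 1`: `ω_{abc} := 1/(h_{ab}·h_{ac}·h_{bc})`. -/
def omegaC (F : Fin 5 → Fin 5 → ℂ) (a b c : Fin 5) : ℂ :=
  1 / (hEdge F a b * hEdge F a c * hEdge F b c)

/-- The quantity `H_u` of formula (Hu), for the pair: oriented edge `b = ij` inside the
tetrahedron `t = ijkl` of the pentachoron `u = ijklm`; `q` assigns a square root of `ω_s`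
to every 3-element subset `s`:
`H(i,j,k,l,m) = h_{ij}·β̃(i,j;k,l)·q_{ijk}q_{ijl}q_{ijm}q_{klm}/(F_{ik}F_{jl} − F_{il}F_{jk})`. -/
def Hu (F : Fin 5 → Fin 5 → ℂ) (q : Finset (Fin 5) → ℂ) (i j k l m : Fin 5) : ℂ :=
  hEdge F i j * betaT F i j k l * q {i, j, k} * q {i, j, l} * q {i, j, m} * q {k, l, m}
    / (F i k * F j l - F i l * F j k)

/-! ### Auxiliary machinery -/

namespace HuAux

set_option maxRecDepth 10000 in
lemma pairs_cover : ∀ i j k l m : Fin 5, i ≠ j → i ≠ k → i ≠ l → i ≠ m → j ≠ k → j ≠ l →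
    j ≠ m → k ≠ l → k ≠ m → l ≠ m →
    (↑([(i,j),(i,k),(j,k),(i,l),(j,l),(i,m),(j,m),(k,l),(k,m),(l,m)].map
        (fun p => (min p.1 p.2, max p.1 p.2))) : Multiset (Fin 5 × Fin 5)) =
      (↑[((0:Fin 5),(1:Fin 5)),(0,2),(1,2),(0,3),(1,3),(0,4),(1,4),(2,3),(2,4),(3,4)] :
        Multiset (Fin 5 × Fin 5)) := by
  decide

/-- a chosen square root function on `ℂ`. -/
def sqrt0 (z : ℂ) : ℂ :=
  Classical.choose (IsAlgClosed.exists_pow_nat_eq z (n := 2) (by norm_num))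

lemma sqrt0_sq (z : ℂ) : sqrt0 z ^ 2 = z :=
  Classical.choose_spec (IsAlgClosed.exists_pow_nat_eq z (n := 2) (by norm_num))

/-- a chosen symmetric square root of `hEdge F a b`. -/
def sqh (F : Fin 5 → Fin 5 → ℂ) (a b : Fin 5) : ℂ :=
  sqrt0 (hEdge F (min a b) (max a b))

lemma hEdge_comm (F : Fin 5 → Fin 5 → ℂ) (a b : Fin 5) : hEdge F a b = hEdge F b a := by
  unfold hEdge
  rw [min_comm, max_comm, Finset.pair_comm]

lemma sqh_comm (F : Fin 5 → Fin 5 → ℂ) (a b : Fin 5) : sqh F a b = sqh F b a := by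
  unfold sqh
  rw [min_comm, max_comm]

lemma sqh_minmax (F : Fin 5 → Fin 5 → ℂ) (a b : Fin 5) :
    sqh F (min a b) (max a b) = sqh F a b := by
  unfold sqh
  rw [min_eq_left (min_le_max (a := a) (b := b)), max_eq_right (min_le_max (a := a) (b := b))]

lemma sqh_sq (F : Fin 5 → Fin 5 → ℂ) (a b : Fin 5) : sqh F a b ^ 2 = hEdge F a b := by
  rcases le_total a b with h | h
  · rw [sqh, sqrt0_sq, min_eq_left h, max_eq_right h]
  · rw [sqh, sqrt0_sq, min_eq_right h, max_eq_left h, hEdge_comm]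

/-- the chosen square roots `q_s` of `ω_s`. -/
def qch (F : Fin 5 → Fin 5 → ℂ) (s : Finset (Fin 5)) : ℂ :=
  match s.sort (· ≤ ·) with
  | [a, b, c] => 1 / (sqh F a b * sqh F a c * sqh F b c)
  | _ => 0

lemma sort_triple {a b c : Fin 5} (hab : a < b) (hbc : b < c) :
    Finset.sort ({a, b, c} : Finset (Fin 5)) (· ≤ ·) = [a, b, c] := by
  have hac := hab.trans hbc
  have h1 : ∀ x ∈ ({c} : Finset (Fin 5)), b ≤ x := by simp [hbc.le]
  have h2 : b ∉ ({c} : Finset (Fin 5)) := by simp [hbc.ne]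
  have h3 : ∀ x ∈ ({b, c} : Finset (Fin 5)), a ≤ x := by
    intro x hx
    rcases Finset.mem_insert.1 hx with rfl | hx
    · exact hab.le
    · simp only [Finset.mem_singleton] at hx; subst hx; exact hac.le
  have h4 : a ∉ ({b, c} : Finset (Fin 5)) := by
    simp [hab.ne, hac.ne]
  show Finset.sort (insert a ({b, c} : Finset (Fin 5))) (· ≤ ·) = _
  rw [Finset.sort_insert _ h3 h4]
  show a :: Finset.sort (insert b ({c} : Finset (Fin 5))) (· ≤ ·) = _
  rw [Finset.sort_insert _ h1 h2, Finset.sort_singleton]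

lemma qch_sorted (F : Fin 5 → Fin 5 → ℂ) {a b c : Fin 5} (hab : a < b) (hbc : b < c) :
    qch F {a, b, c} = 1 / (sqh F a b * sqh F a c * sqh F b c) := by
  unfold qch
  rw [sort_triple hab hbc]

lemma qch_eq (F : Fin 5 → Fin 5 → ℂ) (a b c : Fin 5) (hab : a ≠ b) (hac : a ≠ c)
    (hbc : b ≠ c) : qch F {a, b, c} = 1 / (sqh F a b * sqh F a c * sqh F b c) := by
  rcases hab.lt_or_gt with h1 | h1 <;> rcases hac.lt_or_gt with h2 | h2 <;>
    rcases hbc.lt_or_gt with h3 | h3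
  · exact qch_sorted F h1 h3
  · have e : ({a, b, c} : Finset (Fin 5)) = {a, c, b} := by ext t; simp; tauto
    rw [e, qch_sorted F h2 h3, sqh_comm F c b]; ring
  · exact absurd (h1.trans h3) (asymm h2)
  · have e : ({a, b, c} : Finset (Fin 5)) = {c, a, b} := by ext t; simp; tauto
    rw [e, qch_sorted F h2 h1, sqh_comm F c a, sqh_comm F c b]; ring
  · have e : ({a, b, c} : Finset (Fin 5)) = {b, a, c} := by ext t; simp; tauto
    rw [e, qch_sorted F h1 h2, sqh_comm F b a]; ring
  · exact absurd (h2.trans h3) (asymm h1)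
  · have e : ({a, b, c} : Finset (Fin 5)) = {b, c, a} := by ext t; simp; tauto
    rw [e, qch_sorted F h3 h2, sqh_comm F b a, sqh_comm F c a]; ring
  · have e : ({a, b, c} : Finset (Fin 5)) = {c, b, a} := by ext t; simp; tauto
    rw [e, qch_sorted F h3 h1, sqh_comm F c a, sqh_comm F c b, sqh_comm F b a]; ring

end HuAux

open HuAux

/-- Theorem 2: if all `h_{ab} ≠ 0` and all
`F_{ik}F_{jl} − F_{il}F_{jk} ≠ 0` for permutations `(i,j,k,l,m)` of the vertices, then
there is a choice of square roots `q` (with `q_s² = ω_s` for every 3-element subset `s`)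
such that `H(i,j,k,l,m)` takes one and the same value for all permutations `(i,j,k,l,m)`;
this common value is the square `η_u²` of the paper's factor `η_u`. -/
theorem Hu_well_defined (F : Fin 5 → Fin 5 → ℂ) (hF : ∀ a b, F a b = - F b a)
    (hh : ∀ a b : Fin 5, a < b → hEdge F a b ≠ 0)
    (hbeta : ∀ σ : Equiv.Perm (Fin 5),
      F (σ 0) (σ 2) * F (σ 1) (σ 3) - F (σ 0) (σ 3) * F (σ 1) (σ 2) ≠ 0) :
    ∃ q : Finset (Fin 5) → ℂ,
      (∀ a b c : Fin 5, a ≠ b → a ≠ c → b ≠ c → (q {a, b, c}) ^ 2 = omegaC F a b c) ∧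
      ∃ ηsq : ℂ, ∀ σ : Equiv.Perm (Fin 5),
        Hu F q (σ 0) (σ 1) (σ 2) (σ 3) (σ 4) = ηsq := by
  have hh' : ∀ a b : Fin 5, a ≠ b → hEdge F a b ≠ 0 := by
    intro a b hab
    rcases hab.lt_or_gt with h | h
    · exact hh a b h
    · rw [hEdge_comm]; exact hh b a h
  have hgne : ∀ a b : Fin 5, a ≠ b → sqh F a b ≠ 0 := by
    intro a b hab h0
    exact hh' a b hab (by rw [← sqh_sq F a b, h0]; ring)
  refine ⟨qch F, ?_, ?_⟩
  · intro a b c hab hac hbc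
    rw [qch_eq F a b c hab hac hbc, omegaC, div_pow, one_pow, mul_pow, mul_pow,
      sqh_sq, sqh_sq, sqh_sq]
  · refine ⟨1 / (([((0:Fin 5),(1:Fin 5)),(0,2),(1,2),(0,3),(1,3),(0,4),(1,4),(2,3),(2,4),(3,4)] :
        List (Fin 5 × Fin 5)).map (fun p => sqh F p.1 p.2)).prod, ?_⟩
    intro σ
    set i := σ 0 with hi
    set j := σ 1 with hj
    set k := σ 2 with hk
    set l := σ 3 with hl
    set m := σ 4 with hm
    have hne : ∀ x y : Fin 5, x ≠ y → σ x ≠ σ y := fun x y h e => h (σ.injective e)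
    have hij : i ≠ j := hne 0 1 (by decide)
    have hik : i ≠ k := hne 0 2 (by decide)
    have hil : i ≠ l := hne 0 3 (by decide)
    have him : i ≠ m := hne 0 4 (by decide)
    have hjk : j ≠ k := hne 1 2 (by decide)
    have hjl : j ≠ l := hne 1 3 (by decide)
    have hjm : j ≠ m := hne 1 4 (by decide)
    have hkl : k ≠ l := hne 2 3 (by decide)
    have hkm : k ≠ m := hne 2 4 (by decide)
    have hlm : l ≠ m := hne 3 4 (by decide)
    have hms := pairs_cover i j k l m hij hik hil him hjk hjl hjm hkl hkm hlm
    have hmapped : (([(i,j),(i,k),(j,k),(i,l),(j,l),(i,m),(j,m),(k,l),(k,m),(l,m)].map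
          (fun p => (min p.1 p.2, max p.1 p.2))).map (fun p => sqh F p.1 p.2))
        = ([(i,j),(i,k),(j,k),(i,l),(j,l),(i,m),(j,m),(k,l),(k,m),(l,m)].map
          (fun p => sqh F p.1 p.2)) := by
      simp [List.map_map, Function.comp, sqh_minmax]
    have hprodeq : (([(i,j),(i,k),(j,k),(i,l),(j,l),(i,m),(j,m),(k,l),(k,m),(l,m)] :
          List (Fin 5 × Fin 5)).map (fun p => sqh F p.1 p.2)).prod
        = (([((0:Fin 5),(1:Fin 5)),(0,2),(1,2),(0,3),(1,3),(0,4),(1,4),(2,3),(2,4),(3,4)] :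
          List (Fin 5 × Fin 5)).map (fun p => sqh F p.1 p.2)).prod := by
      rw [← hmapped]
      have h1 : ∀ (L : List (Fin 5 × Fin 5)),
          (L.map (fun p => sqh F p.1 p.2)).prod
            = ((L : Multiset (Fin 5 × Fin 5)).map (fun p => sqh F p.1 p.2)).prod := by
        intro L; simp
      rw [h1, h1, hms]
    have hB : F i k * F j l - F i l * F j k ≠ 0 := hbeta σ
    have hc : ∀ X B q1 q2 q3 q4 : ℂ, B ≠ 0 →
        X * B * q1 * q2 * q3 * q4 / B = X * q1 * q2 * q3 * q4 := by
      intro X B q1 q2 q3 q4 hB0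
      field_simp
    rw [← hprodeq]
    show Hu F (qch F) i j k l m = _
    simp only [Hu, betaT]
    rw [hc _ _ _ _ _ _ hB, qch_eq F i j k hij hik hjk, qch_eq F i j l hij hil hjl,
      qch_eq F i j m hij him hjm, qch_eq F k l m hkl hkm hlm, ← sqh_sq F i j]
    simp only [List.map_cons, List.map_nil, List.prod_cons, List.prod_nil]
    field_simp [hgne i j hij, hgne i k hik, hgne i l hil, hgne i m him,
      hgne j k hjk, hgne j l hjl, hgne j m hjm, hgne k l hkl, hgne k m hkm, hgne l m hlm]
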